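/- Let G be a finite group and let g ≥ 1 be an integer. Then the number of 2g-tuples (s₁,t₁,…,s_g,t_g) ∈ G^{2g} satisfying [s₁,t₁][s₂,t₂]⋯[s_g,t_g] = 1 equals, as a complex number, the sum over all isomorphism classes λ of irreducible complex representations of G of (|G| / dim λ)^{2g−1} · (dim λ). Equivalently, |Hom(π₁(Σ_g), G)| / |G| = Σ_λ (dim λ / |G|)^{2−2g}. -/

import Mathlib

open CategoryTheory Module
open scoped Classical

noncomputable section CountingAux

set_option linter.unusedSectionVars false

namespace CountingAux

variable {G : Type} [Group G] [Fintype G]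

/-- The subrepresentation on an invariant submodule, as an `FDRep`. -/
def subrep (V : FDRep ℂ G) (p : Submodule ℂ V) (h : ∀ g : G, ∀ x ∈ p, V.ρ g x ∈ p) :
    FDRep ℂ G :=
  FDRep.of
    { toFun := fun g => (V.ρ g).restrict (h g)
      map_one' := by ext x; simp [LinearMap.restrict_apply]
      map_mul' := by intro g h'; ext x; simp [LinearMap.restrict_apply] }

theorem subrep_character (V : FDRep ℂ G) (p : Submodule ℂ V)
    (h : ∀ g : G, ∀ x ∈ p, V.ρ g x ∈ p) (z : G) :
    (subrep V p h).character z = LinearMap.trace ℂ p ((V.ρ z).restrict (h z)) := rfl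

theorem finrank_subrep (V : FDRep ℂ G) (p : Submodule ℂ V)
    (h : ∀ g : G, ∀ x ∈ p, V.ρ g x ∈ p) :
    finrank ℂ (subrep V p h) = finrank ℂ p := rfl

theorem comm_apply {Y V : FDRep ℂ G} (f : Y ⟶ V) (g : G) (x : Y) :
    f.hom.hom.hom (Y.ρ g x) = V.ρ g (f.hom.hom.hom x) :=
  ConcreteCategory.congr_hom (f.comm g) x

/-- A nontrivial representation with no proper invariant submodule is simple. -/
theorem simple_of_irreducible (V : FDRep ℂ G) (hdim : 0 < finrank ℂ V)
    (hirr : ∀ p : Submodule ℂ V, (∀ g : G, ∀ x ∈ p, V.ρ g x ∈ p) → p = ⊥ ∨ p = ⊤) :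
    Simple V := by
  constructor
  intro Y f hf
  constructor
  · intro hiso h0
    have h1 : (𝟙 V : V ⟶ V) = CategoryTheory.inv f ≫ f := (IsIso.inv_hom_id f).symm
    have hf0 : f.hom = 0 := congrArg Action.Hom.hom h0
    have : Nontrivial V := Module.nontrivial_of_finrank_pos hdim
    obtain ⟨x, hx⟩ := exists_ne (0 : V)
    apply hx
    have h3 : x = f.hom ((CategoryTheory.inv f).hom x) :=
      by have := ConcreteCategory.congr_hom (congrArg Action.Hom.hom h1) x; exact this
    rw [hf0] at h3
    exact h3.trans rfl
  · intro hne
    have hker : LinearMap.ker f.hom.hom.hom = ⊥ := by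
      set K := LinearMap.ker f.hom.hom.hom with hK
      have hKinv : ∀ g : G, ∀ x ∈ K, Y.ρ g x ∈ K := by
        intro g x hx
        simp only [hK, LinearMap.mem_ker] at hx ⊢
        exact (comm_apply f g x).trans (by rw [hx, map_zero])
      let ι : subrep Y K hKinv ⟶ Y := Action.Hom.mk (FGModuleCat.ofHom K.subtype) (fun g => rfl)
      have hcomp : ι ≫ f = (0 : subrep Y K hKinv ⟶ Y) ≫ f := by
        apply Action.Hom.ext
        apply FGModuleCat.hom_ext
        apply LinearMap.ext
        rintro ⟨x, hx⟩
        rw [Limits.zero_comp]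
        exact hx
      have hι : ι = 0 := Mono.right_cancellation _ _ hcomp
      rw [Submodule.eq_bot_iff]
      intro x hx
      exact (ConcreteCategory.congr_hom (congrArg Action.Hom.hom hι) ⟨x, hx⟩ : _)
    have hrinv : ∀ g : G, ∀ x ∈ LinearMap.range f.hom.hom.hom, V.ρ g x ∈ LinearMap.range f.hom.hom.hom := by
      rintro g x ⟨y, rfl⟩
      exact ⟨Y.ρ g y, comm_apply f g y⟩
    have hrange : LinearMap.range f.hom.hom.hom = ⊤ := by
      rcases hirr (LinearMap.range f.hom.hom.hom) hrinv with h | h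
      · exfalso
        apply hne
        apply Action.Hom.ext
        apply FGModuleCat.hom_ext
        apply LinearMap.ext
        intro x
        have : f.hom.hom.hom x ∈ LinearMap.range f.hom.hom.hom := ⟨x, rfl⟩
        rw [h] at this
        simpa using this
      · exact h
    have hbij : Function.Bijective f.hom.hom.hom :=
      ⟨LinearMap.ker_eq_bot.mp hker, LinearMap.range_eq_top.mp hrange⟩
    let e : Y ≃ₗ[ℂ] V := LinearEquiv.ofBijective f.hom.hom.hom hbij
    have key : ∀ g : G, ∀ x : V, e.symm (V.ρ g x) = Y.ρ g (e.symm x) := by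
      intro g x
      apply e.injective
      rw [e.apply_symm_apply]
      have h2 : e (Y.ρ g (e.symm x)) = V.ρ g (e (e.symm x)) := comm_apply f g (e.symm x)
      rw [h2, e.apply_symm_apply]
    refine ⟨⟨Action.Hom.mk (FGModuleCat.ofHom (e.symm : V →ₗ[ℂ] Y)) ?_, ?_, ?_⟩⟩
    · intro g
      exact FGModuleCat.hom_ext (LinearMap.ext fun x => key g x)
    · apply Action.Hom.ext
      exact FGModuleCat.hom_ext (LinearMap.ext fun x => e.symm_apply_apply x)
    · apply Action.Hom.ext
      exact FGModuleCat.hom_ext <| LinearMap.ext fun x => e.apply_symm_apply x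

theorem ρ_mul_apply (V : FDRep ℂ G) (a b : G) (x : V) :
    V.ρ a (V.ρ b x) = V.ρ (a * b) x := by rw [map_mul]; rfl

/-- Maschke: an invariant submodule has an invariant complement. -/
theorem exists_invariant_compl (V : FDRep ℂ G) (p : Submodule ℂ V)
    (hp : ∀ g : G, ∀ x ∈ p, V.ρ g x ∈ p) :
    ∃ q : Submodule ℂ V, (∀ g : G, ∀ x ∈ q, V.ρ g x ∈ q) ∧ IsCompl p q := by
  have hcard : (Fintype.card G : ℂ) ≠ 0 := by
    exact_mod_cast Nat.cast_ne_zero.mpr Fintype.card_ne_zero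
  obtain ⟨q₀, hq₀⟩ := Submodule.exists_isCompl p
  set π₀ : V →ₗ[ℂ] V := p.subtype ∘ₗ (p.projectionOnto q₀ hq₀) with hπ₀
  have hπ₀mem : ∀ x : V, π₀ x ∈ p := fun x => (p.projectionOnto q₀ hq₀ x).2
  have hπ₀id : ∀ x ∈ p, π₀ x = x := by
    intro x hx
    simp [hπ₀, Submodule.projectionOnto_apply_left hq₀ ⟨x, hx⟩]
  set π : V →ₗ[ℂ] V :=
    (Fintype.card G : ℂ)⁻¹ • ∑ g : G, (V.ρ g) ∘ₗ π₀ ∘ₗ (V.ρ g⁻¹) with hπ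
  have hρρ : ∀ (g : G) (x : V), V.ρ g (V.ρ g⁻¹ x) = x := by
    intro g x
    rw [ρ_mul_apply, mul_inv_cancel, map_one]
    rfl
  have hπmem : ∀ x : V, π x ∈ p := by
    intro x
    rw [hπ]
    simp only [LinearMap.smul_apply, LinearMap.sum_apply, LinearMap.comp_apply]
    exact Submodule.smul_mem _ _ (Submodule.sum_mem _ fun g _ => hp g _ (hπ₀mem _))
  have hπid : ∀ x ∈ p, π x = x := by
    intro x hx
    rw [hπ]
    simp only [LinearMap.smul_apply, LinearMap.sum_apply, LinearMap.comp_apply]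
    have h1 : ∀ g : G, V.ρ g (π₀ (V.ρ g⁻¹ x)) = x := by
      intro g
      rw [hπ₀id _ (hp g⁻¹ x hx), hρρ]
    rw [Finset.sum_congr rfl fun g _ => h1 g, Finset.sum_const, Finset.card_univ,
      ← Nat.cast_smul_eq_nsmul ℂ, smul_smul, inv_mul_cancel₀ hcard, one_smul]
  have hπcomm : ∀ h : G, ∀ x : V, π (V.ρ h x) = V.ρ h (π x) := by
    intro h x
    simp only [hπ, LinearMap.comp_apply, LinearMap.smul_apply, LinearMap.sum_apply]
    rw [map_smul, map_sum]
    congr 1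
    rw [← Equiv.sum_comp (Equiv.mulLeft h) (fun g => V.ρ g (π₀ (V.ρ g⁻¹ (V.ρ h x))))]
    apply Finset.sum_congr rfl
    intro g _
    simp only [Equiv.coe_mulLeft]
    have h1 : V.ρ (h * g)⁻¹ (V.ρ h x) = V.ρ g⁻¹ x := by
      rw [ρ_mul_apply]
      congr 1
      group
    rw [h1, ← ρ_mul_apply]
  set πc : V →ₗ[ℂ] p := LinearMap.codRestrict p π hπmem with hπc
  have hcompl : IsCompl p (LinearMap.ker πc) :=
    LinearMap.isCompl_of_proj (fun x => by
      apply Subtype.ext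
      exact hπid x x.2)
  refine ⟨LinearMap.ker πc, ?_, hcompl⟩
  intro g x hx
  have hx' : π x = 0 := by
    have := congrArg (Submodule.subtype p) (LinearMap.mem_ker.mp hx)
    simpa [hπc] using this
  have : π (V.ρ g x) = 0 := by rw [hπcomm, hx', map_zero]
  rw [LinearMap.mem_ker]
  apply Subtype.ext
  simpa [hπc] using this

theorem char_add_of_isCompl (V : FDRep ℂ G) (p q : Submodule ℂ V)
    (hp : ∀ g : G, ∀ x ∈ p, V.ρ g x ∈ p) (hq : ∀ g : G, ∀ x ∈ q, V.ρ g x ∈ q)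
    (h : IsCompl p q) (z : G) :
    V.character z =
      LinearMap.trace ℂ p ((V.ρ z).restrict (hp z)) +
      LinearMap.trace ℂ q ((V.ρ z).restrict (hq z)) := by
  classical
  set N : Bool → Submodule ℂ V := fun b => cond b p q with hN
  have hint : DirectSum.IsInternal N := by
    rw [DirectSum.isInternal_submodule_iff_isCompl N (i := true) (j := false) (by simp) (by
      ext b; cases b <;> simp)]
    exact h
  have hmap : ∀ b, Set.MapsTo (V.ρ z) (N b) (N b) := by
    intro b
    cases b
    · exact fun x hx => hq z x hx
    · exact fun x hx => hp z x hx
  have := LinearMap.trace_eq_sum_trace_restrict hint hmap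
  rw [FDRep.character]
  rw [this, Fintype.sum_bool]
  rfl

theorem char_decomp (ι : Type) [Fintype ι] (Irr : ι → FDRep ℂ G)
    (hcomplete : ∀ V : FDRep ℂ G, Simple V → ∃ i, Nonempty (V ≅ Irr i)) :
    ∀ V : FDRep ℂ G, ∃ c : ι → ℕ, ∀ z : G,
      V.character z = ∑ i, (c i : ℂ) * (Irr i).character z := by
  classical
  suffices h : ∀ n : ℕ, ∀ V : FDRep ℂ G, finrank ℂ V = n → ∃ c : ι → ℕ, ∀ z : G,
      V.character z = ∑ i, (c i : ℂ) * (Irr i).character z by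
    intro V; exact h _ V rfl
  intro n
  induction n using Nat.strong_induction_on with
  | _ n IH =>
    intro V hn
    rcases Nat.eq_zero_or_pos n with h0 | hpos
    · refine ⟨0, fun z => ?_⟩
      rw [h0] at hn
      have hsub : Subsingleton V := finrank_zero_iff.mp hn
      have hz : V.ρ z = 0 := Subsingleton.elim _ _
      simp [FDRep.character, hz]
    · by_cases hs : ∀ p : Submodule ℂ V, (∀ g : G, ∀ x ∈ p, V.ρ g x ∈ p) → p = ⊥ ∨ p = ⊤
      · haveI : Simple V := simple_of_irreducible V (hn ▸ hpos) hs
        obtain ⟨i, ⟨e⟩⟩ := hcomplete V inferInstance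
        refine ⟨fun j => if j = i then 1 else 0, fun z => ?_⟩
        rw [FDRep.char_iso e]
        rw [Finset.sum_congr rfl (fun j _ => by
          rw [show ((if j = i then (1:ℕ) else 0 : ℕ) : ℂ) = if j = i then (1:ℂ) else 0 by
            split <;> simp, ite_mul, one_mul, zero_mul])]
        rw [Finset.sum_ite_eq' Finset.univ i (fun j => (Irr j).character z)]
        simp
      · push_neg at hs
        obtain ⟨p, hpinv, hpne⟩ := hs
        have hpbot : p ≠ ⊥ := hpne.1
        have hptop : p ≠ ⊤ := hpne.2
        obtain ⟨q, hqinv, hcompl⟩ := exists_invariant_compl V p hpinv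
        have hqtop : q ≠ ⊤ := by
          intro h
          apply hpbot
          have := hcompl.disjoint
          rw [h, disjoint_top] at this
          exact this
        have hfp : finrank ℂ p < n := hn ▸ Submodule.finrank_lt hptop
        have hfq : finrank ℂ q < n := hn ▸ Submodule.finrank_lt hqtop
        obtain ⟨c₁, hc₁⟩ := IH _ hfp (subrep V p hpinv) (finrank_subrep V p hpinv)
        obtain ⟨c₂, hc₂⟩ := IH _ hfq (subrep V q hqinv) (finrank_subrep V q hqinv)
        refine ⟨c₁ + c₂, fun z => ?_⟩
        rw [char_add_of_isCompl V p q hpinv hqinv hcompl z,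
          ← subrep_character V p hpinv z, ← subrep_character V q hqinv z, hc₁ z, hc₂ z,
          ← Finset.sum_add_distrib]
        apply Finset.sum_congr rfl
        intro i _
        simp only [Pi.add_apply, Nat.cast_add]
        ring



/-- The regular representation. -/
def reg (G : Type) [Group G] [Fintype G] : FDRep ℂ G :=
  FDRep.of (Representation.ofMulAction ℂ G G)

theorem char_reg (z : G) :
    (reg G).character z = if z = 1 then (Fintype.card G : ℂ) else 0 := by
  have h0 : (reg G).character z
      = LinearMap.trace ℂ (MonoidAlgebra ℂ G) (Representation.ofMulAction ℂ G G z) := rfl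
  rw [h0, LinearMap.trace_eq_matrix_trace ℂ (MonoidAlgebra.basis G ℂ),
    Matrix.trace]
  have hdiag : ∀ a : G, (LinearMap.toMatrix (MonoidAlgebra.basis G ℂ)
      (MonoidAlgebra.basis G ℂ) ((Representation.ofMulAction ℂ G G) z)).diag a
      = if z = 1 then 1 else 0 := by
    intro a
    rw [Matrix.diag, LinearMap.toMatrix_apply]
    simp only [MonoidAlgebra.basis_apply, Representation.ofMulAction_single]
    change (MonoidAlgebra.single (z • a) (1:ℂ)).coeff a = _
    rw [MonoidAlgebra.coeff_single]
    rw [Finsupp.single_apply]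
    by_cases h : z = 1
    · simp [h]
    · have hne : ¬ (z • a = a) := by
        simp only [smul_eq_mul]
        intro hc
        exact h (by have : z * a = 1 * a := by rw [one_mul]; exact hc
                    exact mul_right_cancel this)
      simp [h, hne]
  rw [Finset.sum_congr rfl fun a _ => hdiag a]
  split <;> simp [Finset.card_univ]



theorem card_ne_zero : (Fintype.card G : ℂ) ≠ 0 :=
  Nat.cast_ne_zero.mpr Fintype.card_ne_zero

theorem orth (ι : Type) [Fintype ι] (Irr : ι → FDRep ℂ G)
    (hsimple : ∀ i, Simple (Irr i))
    (hirredundant : ∀ i j : ι, Nonempty (Irr i ≅ Irr j) → i = j) (i j : ι) :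
    (Fintype.card G : ℂ)⁻¹ * ∑ z : G, (Irr j).character z * (Irr i).character z⁻¹
      = if j = i then 1 else 0 := by
  haveI : Invertible (Fintype.card G : ℂ) := invertibleOfNonzero card_ne_zero
  haveI := hsimple i
  haveI := hsimple j
  have horth := FDRep.char_orthonormal (Irr j) (Irr i)
  rw [Nat.card_eq_fintype_card] at horth
  have horth' : (Fintype.card G : ℂ)⁻¹ * ∑ z : G, (Irr j).character z * (Irr i).character z⁻¹
      = if Nonempty (Irr j ≅ Irr i) then 1 else 0 := horth
  rw [horth']
  congr 1
  simp only [eq_iff_iff]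
  exact ⟨hirredundant j i, fun h => h ▸ ⟨Iso.refl _⟩⟩

theorem sum_dim_char (ι : Type) [Fintype ι] (Irr : ι → FDRep ℂ G)
    (hsimple : ∀ i, Simple (Irr i))
    (hirredundant : ∀ i j : ι, Nonempty (Irr i ≅ Irr j) → i = j)
    (hcomplete : ∀ V : FDRep ℂ G, Simple V → ∃ i, Nonempty (V ≅ Irr i)) (z : G) :
    ∑ i, (Irr i).character 1 * (Irr i).character z
      = if z = 1 then (Fintype.card G : ℂ) else 0 := by
  obtain ⟨c, hc⟩ := char_decomp ι Irr hcomplete (reg G)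
  have key1 : ∀ i : ι, (Fintype.card G : ℂ)⁻¹
      * ∑ w : G, (reg G).character w * (Irr i).character w⁻¹ = (Irr i).character 1 := by
    intro i
    rw [Finset.sum_congr rfl fun w _ => by rw [char_reg w, ite_mul, zero_mul]]
    rw [Finset.sum_ite_eq' Finset.univ (1 : G)
      (fun w => (Fintype.card G : ℂ) * (Irr i).character w⁻¹)]
    simp only [Finset.mem_univ, if_true, inv_one]
    rw [← mul_assoc, inv_mul_cancel₀ card_ne_zero, one_mul]
  have key2 : ∀ i : ι, (Fintype.card G : ℂ)⁻¹
      * ∑ w : G, (reg G).character w * (Irr i).character w⁻¹ = (c i : ℂ) := by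
    intro i
    rw [Finset.sum_congr rfl fun w _ => by rw [hc w, Finset.sum_mul]]
    rw [Finset.sum_comm, Finset.mul_sum]
    rw [Finset.sum_congr rfl fun j _ => show (Fintype.card G : ℂ)⁻¹
        * ∑ w : G, ((c j : ℂ) * (Irr j).character w) * (Irr i).character w⁻¹
        = if j = i then (c j : ℂ) else 0 from by
      rw [show (if j = i then ((c j : ℕ) : ℂ) else 0)
          = (c j : ℂ) * (if j = i then 1 else 0) from by split <;> simp]
      rw [← orth ι Irr hsimple hirredundant i j,
        Finset.mul_sum, Finset.mul_sum, Finset.mul_sum]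
      congr 1
      funext w
      ring]
    rw [Finset.sum_ite_eq' Finset.univ i (fun j => (c j : ℂ))]
    simp
  have hci : ∀ i, (Irr i).character 1 = (c i : ℂ) :=
    fun i => (key1 i).symm.trans (key2 i)
  rw [Finset.sum_congr rfl fun i _ => by rw [hci i], ← hc z, char_reg]



theorem ρ_mul_apply' (V : FDRep ℂ G) (a b : G) (x : V) :
    V.ρ a (V.ρ b x) = V.ρ (a * b) x := by rw [map_mul]; rfl

theorem finrank_pos_of_simple (V : FDRep ℂ G) [Simple V] : 0 < finrank ℂ V := by
  by_contra h
  push_neg at h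
  have h0 : finrank ℂ V = 0 := Nat.le_zero.mp h
  have hsub : Subsingleton V := finrank_zero_iff.mp h0
  have hid : (𝟙 V : V ⟶ V) = 0 := by
    apply Action.Hom.ext
    apply FGModuleCat.hom_ext
    apply LinearMap.ext
    intro x
    exact @Subsingleton.elim _ hsub _ _
  exact (CategoryTheory.id_nonzero V) hid

theorem char_one_ne_zero (V : FDRep ℂ G) [Simple V] : V.character 1 ≠ 0 := by
  rw [FDRep.char_one]
  exact Nat.cast_ne_zero.mpr (finrank_pos_of_simple V).ne'

theorem schur_scalar (V : FDRep ℂ G) [Simple V] (f : V →ₗ[ℂ] V)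
    (hf : ∀ g : G, f ∘ₗ V.ρ g = V.ρ g ∘ₗ f) :
    f = (LinearMap.trace ℂ V f / V.character 1) • LinearMap.id := by
  obtain ⟨c, hc⟩ := endomorphism_simple_eq_smul_id (X := V) ℂ (Action.Hom.mk (FGModuleCat.ofHom f) (fun g => FGModuleCat.hom_ext (hf g)))
  have hfc : f = c • LinearMap.id := (congrArg (fun φ => φ.hom.hom.hom) hc).symm
  have htr : LinearMap.trace ℂ V f = c * V.character 1 := by
    rw [hfc, map_smul, LinearMap.trace_id, smul_eq_mul, FDRep.char_one]
  rw [htr, mul_div_cancel_right₀ c (char_one_ne_zero V), ← hfc]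

/-- Averaging an arbitrary endomorphism over the group yields a scalar. -/
theorem avg_scalar (V : FDRep ℂ G) [Simple V] (A : V →ₗ[ℂ] V) :
    ∑ t : G, V.ρ t * A * V.ρ t⁻¹
      = ((Fintype.card G : ℂ) * LinearMap.trace ℂ V A / V.character 1) •
        (LinearMap.id : V →ₗ[ℂ] V) := by
  have hcomm : ∀ s : G, (∑ t : G, V.ρ t * A * V.ρ t⁻¹) ∘ₗ V.ρ s
      = V.ρ s ∘ₗ (∑ t : G, V.ρ t * A * V.ρ t⁻¹) := by
    intro s
    apply LinearMap.ext
    intro x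
    simp only [LinearMap.comp_apply, LinearMap.sum_apply, Module.End.mul_apply, map_sum]
    rw [← Equiv.sum_comp (Equiv.mulLeft s) (fun t => V.ρ t (A (V.ρ t⁻¹ (V.ρ s x))))]
    apply Finset.sum_congr rfl
    intro t _
    simp only [Equiv.coe_mulLeft]
    have h1 : V.ρ (s * t)⁻¹ (V.ρ s x) = V.ρ t⁻¹ x := by
      rw [ρ_mul_apply']
      congr 1
      group
    rw [h1, ← ρ_mul_apply']
  have htr : LinearMap.trace ℂ V (∑ t : G, V.ρ t * A * V.ρ t⁻¹)
      = (Fintype.card G : ℂ) * LinearMap.trace ℂ V A := by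
    rw [map_sum]
    have : ∀ t : G, LinearMap.trace ℂ V (V.ρ t * A * V.ρ t⁻¹) = LinearMap.trace ℂ V A := by
      intro t
      rw [LinearMap.trace_mul_comm]
      have : V.ρ t⁻¹ * (V.ρ t * A) = A := by
        rw [← mul_assoc, ← map_mul, inv_mul_cancel, map_one, one_mul]
      rw [this]
    rw [Finset.sum_congr rfl fun t _ => this t, Finset.sum_const, Finset.card_univ,
      nsmul_eq_mul]
  have := schur_scalar V (∑ t : G, V.ρ t * A * V.ρ t⁻¹) hcomm
  rw [htr] at this
  exact this

/-- The weighted sum `∑ χ(s⁻¹) ρ(s)` is the scalar `|G|/d`. -/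
theorem sum_char_inv_rho (V : FDRep ℂ G) [Simple V]
    (horth : ∑ s : G, V.character s * V.character s⁻¹ = (Fintype.card G : ℂ)) :
    ∑ s : G, V.character s⁻¹ • V.ρ s
      = ((Fintype.card G : ℂ) / V.character 1) • (LinearMap.id : V →ₗ[ℂ] V) := by
  have hcomm : ∀ t : G, (∑ s : G, V.character s⁻¹ • V.ρ s) ∘ₗ V.ρ t
      = V.ρ t ∘ₗ (∑ s : G, V.character s⁻¹ • V.ρ s) := by
    intro t
    apply LinearMap.ext
    intro x
    simp only [LinearMap.comp_apply, LinearMap.sum_apply, LinearMap.smul_apply, map_sum,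
      map_smul]
    rw [← Equiv.sum_comp ((Equiv.mulLeft t).trans (Equiv.mulRight t⁻¹))
      (fun s => V.character s⁻¹ • V.ρ s (V.ρ t x))]
    apply Finset.sum_congr rfl
    intro s _
    simp only [Equiv.trans_apply, Equiv.coe_mulLeft, Equiv.coe_mulRight]
    have h1 : V.character (t * s * t⁻¹)⁻¹ = V.character s⁻¹ := by
      have : (t * s * t⁻¹)⁻¹ = t * s⁻¹ * t⁻¹ := by group
      rw [this, FDRep.char_conj]
    rw [h1]
    congr 1
    rw [ρ_mul_apply' V (t * s * t⁻¹) t, ρ_mul_apply' V t s]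
    have h2 : t * s * t⁻¹ * t = t * s := by group
    rw [h2]
  have htr : LinearMap.trace ℂ V (∑ s : G, V.character s⁻¹ • V.ρ s)
      = (Fintype.card G : ℂ) := by
    have hterm : ∀ s : G, LinearMap.trace ℂ V (V.character s⁻¹ • V.ρ s)
        = V.character s * V.character s⁻¹ := by
      intro s
      rw [map_smul, smul_eq_mul,
        show LinearMap.trace ℂ V (V.ρ s) = V.character s from rfl]
      ring
    rw [map_sum, Finset.sum_congr rfl fun s _ => hterm s, horth]
  have := schur_scalar V (∑ s : G, V.character s⁻¹ • V.ρ s) hcomm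
  rw [htr] at this
  exact this

/-- The sum over all commutators of `ρ` is the scalar `(|G|/d)^2`. -/
theorem sum_rho_comm (V : FDRep ℂ G) [Simple V]
    (horth : ∑ s : G, V.character s * V.character s⁻¹ = (Fintype.card G : ℂ)) :
    ∑ p : G × G, V.ρ (p.1 * p.2 * p.1⁻¹ * p.2⁻¹)
      = (((Fintype.card G : ℂ) / V.character 1) ^ 2) • (LinearMap.id : V →ₗ[ℂ] V) := by
  rw [Fintype.sum_prod_type]
  have hterm : ∀ s : G, ∑ t : G, V.ρ (s * t * s⁻¹ * t⁻¹)
      = ((Fintype.card G : ℂ) / V.character 1) • (V.character s⁻¹ • V.ρ s) := by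
    intro s
    have h1 : ∀ t : G, V.ρ (s * t * s⁻¹ * t⁻¹) = V.ρ s * (V.ρ t * V.ρ s⁻¹ * V.ρ t⁻¹) := by
      intro t
      have hg : s * t * s⁻¹ * t⁻¹ = s * (t * s⁻¹ * t⁻¹) := by group
      rw [hg]
      simp only [map_mul]
    rw [Finset.sum_congr rfl fun t _ => h1 t, ← Finset.mul_sum, avg_scalar V (V.ρ s⁻¹),
      show LinearMap.trace ℂ V (V.ρ s⁻¹) = V.character s⁻¹ from rfl,
      mul_smul_comm, show LinearMap.id = (1 : V →ₗ[ℂ] V) from rfl, mul_one, smul_smul,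
      show (Fintype.card G : ℂ) * V.character s⁻¹ / V.character 1
        = ((Fintype.card G : ℂ) / V.character 1) * V.character s⁻¹ from by ring, mul_smul]
  rw [Finset.sum_congr rfl fun s _ => hterm s, ← Finset.smul_sum, sum_char_inv_rho V horth,
    smul_smul, ← sq]

/-- Sum of `ρ` over products of `g` commutators. -/
theorem sum_rho_commProd (V : FDRep ℂ G) [Simple V]
    (horth : ∑ s : G, V.character s * V.character s⁻¹ = (Fintype.card G : ℂ)) (n : ℕ) :
    ∑ x : Fin n → G × G,
        V.ρ ((List.ofFn fun i => (x i).1 * (x i).2 * ((x i).1)⁻¹ * ((x i).2)⁻¹).prod)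
      = ((((Fintype.card G : ℂ) / V.character 1) ^ 2) ^ n) • (LinearMap.id : V →ₗ[ℂ] V) := by
  induction n with
  | zero =>
    have h0 : ∀ x : Fin 0 → G × G,
        V.ρ ((List.ofFn fun i => (x i).1 * (x i).2 * ((x i).1)⁻¹ * ((x i).2)⁻¹).prod)
        = LinearMap.id := by
      intro x
      rw [List.ofFn_zero, List.prod_nil, map_one]
      rfl
    rw [Finset.sum_congr rfl fun x _ => h0 x, Finset.sum_const, Finset.card_univ,
      pow_zero, one_smul]
    simp
  | succ n ih =>
    rw [← Equiv.sum_comp (Fin.consEquiv (fun _ : Fin (n + 1) => G × G))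
      (fun x => V.ρ ((List.ofFn fun i => (x i).1 * (x i).2 * ((x i).1)⁻¹ * ((x i).2)⁻¹).prod))]
    have hterm : ∀ pa : (G × G) × (Fin n → G × G),
        V.ρ ((List.ofFn fun i => ((Fin.consEquiv (fun _ : Fin (n + 1) => G × G)) pa i).1
            * ((Fin.consEquiv (fun _ : Fin (n + 1) => G × G)) pa i).2
            * (((Fin.consEquiv (fun _ : Fin (n + 1) => G × G)) pa i).1)⁻¹
            * (((Fin.consEquiv (fun _ : Fin (n + 1) => G × G)) pa i).2)⁻¹).prod)
        = V.ρ (pa.1.1 * pa.1.2 * (pa.1.1)⁻¹ * (pa.1.2)⁻¹)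
          * V.ρ ((List.ofFn fun i => (pa.2 i).1 * (pa.2 i).2 * ((pa.2 i).1)⁻¹
              * ((pa.2 i).2)⁻¹).prod) := by
      rintro ⟨p, y⟩
      rw [← map_mul]
      congr 1
      rw [List.ofFn_succ, List.prod_cons]
      congr 1
    rw [Finset.sum_congr rfl fun pa _ => hterm pa]
    rw [Fintype.sum_prod_type]
    dsimp only
    have hterm2 : ∀ p : G × G,
        (∑ y : Fin n → G × G, V.ρ (p.1 * p.2 * p.1⁻¹ * p.2⁻¹)
          * V.ρ ((List.ofFn fun i => (y i).1 * (y i).2 * ((y i).1)⁻¹ * ((y i).2)⁻¹).prod))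
        = V.ρ (p.1 * p.2 * p.1⁻¹ * p.2⁻¹)
          * (((((Fintype.card G : ℂ) / V.character 1) ^ 2) ^ n) • LinearMap.id) := by
      intro p
      rw [← Finset.mul_sum, ih]
    rw [Finset.sum_congr rfl fun p _ => hterm2 p]
    rw [← Finset.sum_mul, sum_rho_comm V horth]
    rw [smul_mul_smul_comm,
      show (LinearMap.id * LinearMap.id : V →ₗ[ℂ] V) = LinearMap.id from rfl, ← pow_succ']

end CountingAux

set_option maxHeartbeats 1000000 in
open CountingAux in
/-- **Counting formula.** -/
theorem counting_formula
    (G : Type) [Group G] [Fintype G]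
    (ι : Type) [Fintype ι] (Irr : ι → FDRep ℂ G)
    (hsimple : ∀ i, Simple (Irr i))
    (hirredundant : ∀ i j : ι, Nonempty (Irr i ≅ Irr j) → i = j)
    (hcomplete : ∀ V : FDRep ℂ G, Simple V → ∃ i, Nonempty (V ≅ Irr i))
    (g : ℕ) (hg : 1 ≤ g) :
    ((Nat.card {x : Fin g → G × G //
        (List.ofFn fun i => (x i).1 * (x i).2 * ((x i).1)⁻¹ * ((x i).2)⁻¹).prod = 1} : ℕ) : ℂ)
      = ∑ i : ι, ((Fintype.card G : ℂ) / (Irr i).character 1) ^ (2 * g - 1)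
          * (Irr i).character 1
    ∧
    ((Nat.card {x : Fin g → G × G //
        (List.ofFn fun i => (x i).1 * (x i).2 * ((x i).1)⁻¹ * ((x i).2)⁻¹).prod = 1} : ℕ) : ℂ)
        / (Fintype.card G : ℂ)
      = ∑ i : ι, ((Irr i).character 1 / (Fintype.card G : ℂ)) ^ (2 - 2 * (g : ℤ)) := by
  classical
  have hcard : (Fintype.card G : ℂ) ≠ 0 := Nat.cast_ne_zero.mpr Fintype.card_ne_zero
  have hdne : ∀ i, (Irr i).character 1 ≠ 0 := fun i => by
    haveI := hsimple i
    exact char_one_ne_zero (Irr i)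
  have horthi : ∀ i, ∑ s : G, (Irr i).character s * (Irr i).character s⁻¹
      = (Fintype.card G : ℂ) := by
    intro i
    have h := orth ι Irr hsimple hirredundant i i
    rw [if_pos rfl] at h
    have h2 := congrArg (fun x => (Fintype.card G : ℂ) * x) h
    rw [← mul_assoc, mul_inv_cancel₀ hcard, one_mul, mul_one] at h2
    exact h2
  set c : (Fin g → G × G) → G :=
    fun x => (List.ofFn fun i => (x i).1 * (x i).2 * ((x i).1)⁻¹ * ((x i).2)⁻¹).prod with hcdef
  have key : ∀ i : ι, ∑ x : Fin g → G × G, (Irr i).character (c x)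
      = (((Fintype.card G : ℂ) / (Irr i).character 1) ^ 2) ^ g * (Irr i).character 1 := by
    intro i
    haveI := hsimple i
    have h := congrArg (LinearMap.trace ℂ (Irr i)) (sum_rho_commProd (Irr i) (horthi i) g)
    rw [map_sum, map_smul, LinearMap.trace_id, smul_eq_mul] at h
    rw [show ((finrank ℂ (Irr i) : ℂ)) = (Irr i).character 1
      from (FDRep.char_one (Irr i)).symm] at h
    exact h
  have hNcard : ((Nat.card {x : Fin g → G × G // c x = 1} : ℕ) : ℂ)
      = ∑ x : Fin g → G × G, if c x = 1 then (1 : ℂ) else 0 := by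
    rw [Finset.sum_boole, Nat.card_eq_fintype_card, Fintype.card_subtype]
  have main : (Fintype.card G : ℂ) * ((Nat.card {x : Fin g → G × G // c x = 1} : ℕ) : ℂ)
      = ∑ i : ι, (Irr i).character 1
          * ((((Fintype.card G : ℂ) / (Irr i).character 1) ^ 2) ^ g * (Irr i).character 1) := by
    have lhs1 : ∑ x : Fin g → G × G, (if c x = 1 then (Fintype.card G : ℂ) else 0)
        = (Fintype.card G : ℂ) * ((Nat.card {x : Fin g → G × G // c x = 1} : ℕ) : ℂ) := by
      rw [hNcard, Finset.mul_sum]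
      apply Finset.sum_congr rfl
      intro x _
      split <;> simp
    rw [← lhs1]
    rw [Finset.sum_congr rfl fun x _ =>
      (sum_dim_char ι Irr hsimple hirredundant hcomplete (c x)).symm]
    rw [Finset.sum_comm]
    apply Finset.sum_congr rfl
    intro i _
    rw [← Finset.mul_sum, key i]
  have conc1 : ((Nat.card {x : Fin g → G × G // c x = 1} : ℕ) : ℂ)
      = ∑ i : ι, ((Fintype.card G : ℂ) / (Irr i).character 1) ^ (2 * g - 1)
          * (Irr i).character 1 := by
    apply mul_left_cancel₀ hcard
    rw [main, Finset.mul_sum]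
    apply Finset.sum_congr rfl
    intro i _
    have h2 : (((Fintype.card G : ℂ) / (Irr i).character 1) ^ 2) ^ g
        = ((Fintype.card G : ℂ) / (Irr i).character 1) ^ (2 * g) :=
      (pow_mul _ 2 g).symm
    have h3 : 2 * g = (2 * g - 1) + 1 := by omega
    rw [h2, h3, pow_succ]
    have hae := div_mul_cancel₀ (Fintype.card G : ℂ) (hdne i)
    calc (Irr i).character 1
          * (((Fintype.card G : ℂ) / (Irr i).character 1) ^ (2 * g - 1)
            * ((Fintype.card G : ℂ) / (Irr i).character 1) * (Irr i).character 1)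
        = (((Fintype.card G : ℂ) / (Irr i).character 1) ^ (2 * g - 1) * (Irr i).character 1)
            * (((Fintype.card G : ℂ) / (Irr i).character 1) * (Irr i).character 1) := by ring
      _ = (((Fintype.card G : ℂ) / (Irr i).character 1) ^ (2 * g - 1) * (Irr i).character 1)
            * (Fintype.card G : ℂ) := by rw [hae]
      _ = (Fintype.card G : ℂ) * (((Fintype.card G : ℂ) / (Irr i).character 1) ^ (2 * g - 1)
            * (Irr i).character 1) := by ring
  refine ⟨conc1, ?_⟩
  rw [conc1, Finset.sum_div]
  apply Finset.sum_congr rfl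
  intro i _
  have hzpow : ((Irr i).character 1 / (Fintype.card G : ℂ)) ^ (2 - 2 * (g : ℤ))
      = ((Fintype.card G : ℂ) / (Irr i).character 1) ^ (2 * g - 2) := by
    have hι : (2 - 2 * (g : ℤ)) = -(((2 * g - 2 : ℕ) : ℤ)) := by omega
    rw [hι, zpow_neg, zpow_natCast, ← inv_pow, inv_div]
  rw [hzpow]
  have h4 : 2 * g - 1 = (2 * g - 2) + 1 := by omega
  rw [h4, pow_succ]
  have hae := div_mul_cancel₀ (Fintype.card G : ℂ) (hdne i)
  calc ((Fintype.card G : ℂ) / (Irr i).character 1) ^ (2 * g - 2)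
        * ((Fintype.card G : ℂ) / (Irr i).character 1) * (Irr i).character 1
        / (Fintype.card G : ℂ)
      = ((Fintype.card G : ℂ) / (Irr i).character 1) ^ (2 * g - 2)
          * (((Fintype.card G : ℂ) / (Irr i).character 1) * (Irr i).character 1)
          / (Fintype.card G : ℂ) := by ring
    _ = ((Fintype.card G : ℂ) / (Irr i).character 1) ^ (2 * g - 2)
          * (Fintype.card G : ℂ) / (Fintype.card G : ℂ) := by rw [hae]
    _ = ((Fintype.card G : ℂ) / (Irr i).character 1) ^ (2 * g - 2) := by
          rw [mul_div_cancel_right₀ _ hcard]
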